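/- Let A be an integer m×n matrix with rows a^{(1)},...,a^{(m)}, let b ∈ ℤ^m, and let v be a vertex of the integer hull P_I with S = supp(v), s = |S|. Set Γ = 1.12·Σ_{j=1}^m ‖a^{(j)}[S]‖₂ + sqrt(Σ_{i∈S} ‖A_i‖₁²), where A_i are the columns of A[S]. Then s ≤ m·log₂(2eΓ/m + 2e). -/

import Mathlib

open Matrix

/-- The integer hull of `{x ≥ 0 : Ax = b}`. -/
def integerHull {m n : ℕ} (A : Matrix (Fin m) (Fin n) ℤ) (b : Fin m → ℤ) :
    Set (Fin n → ℝ) :=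
  convexHull ℝ
    {x | ∃ z : Fin n → ℤ, (∀ i, 0 ≤ z i) ∧ A.mulVec z = b ∧ x = fun i => (z i : ℝ)}

/-- `v` is a vertex of `P` if `v ∈ P` and `v` is not in the convex hull of `P \ {v}`. -/
def IsVertex {n : ℕ} (P : Set (Fin n → ℝ)) (v : Fin n → ℝ) : Prop :=
  v ∈ P ∧ v ∉ convexHull ℝ (P \ {v})

section Aux

open Finset

lemma pow_sum_L1 {α : Type*} [DecidableEq α] (S : Finset α) (a : α → ℝ) :
    ∑ T ∈ S.powerset, ∑ i ∈ T, a i = 2 ^ S.card / 2 * ∑ i ∈ S, a i := by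
  induction S using Finset.induction_on with
  | empty => simp
  | insert _ _ hx ih =>
    rename_i x s
    rw [Finset.sum_powerset_insert hx, ih, Finset.card_insert_of_notMem hx,
      Finset.sum_insert hx]
    have : ∀ T ∈ s.powerset, ∑ i ∈ insert x T, a i = a x + ∑ i ∈ T, a i := by
      intro T hT
      rw [Finset.sum_insert]
      intro hxT
      exact hx (Finset.mem_of_subset (Finset.mem_powerset.1 hT) hxT)
    rw [Finset.sum_congr rfl this, Finset.sum_add_distrib, Finset.sum_const, ih,
      Finset.card_powerset]
    push_cast
    ring

lemma pow_sum_L2 {α : Type*} [DecidableEq α] (S : Finset α) (a : α → ℝ) :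
    ∑ T ∈ S.powerset, (∑ i ∈ T, a i) ^ 2
      = 2 ^ S.card / 4 * ((∑ i ∈ S, a i) ^ 2 + ∑ i ∈ S, (a i) ^ 2) := by
  induction S using Finset.induction_on with
  | empty => simp
  | insert _ _ hx ih =>
    rename_i x s
    rw [Finset.sum_powerset_insert hx, Finset.card_insert_of_notMem hx,
      Finset.sum_insert hx, Finset.sum_insert hx]
    have h1 : ∀ T ∈ s.powerset, (∑ i ∈ insert x T, a i) ^ 2
        = (∑ i ∈ T, a i) ^ 2 + 2 * a x * (∑ i ∈ T, a i) + a x ^ 2 := by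
      intro T hT
      rw [Finset.sum_insert (fun hxT => hx (Finset.mem_of_subset (Finset.mem_powerset.1 hT) hxT))]
      ring
    rw [Finset.sum_congr rfl h1]
    simp only [Finset.sum_add_distrib, Finset.sum_const, Finset.card_powerset, ← Finset.mul_sum]
    rw [ih, pow_sum_L1]
    push_cast
    ring

lemma pow_sum_double {α : Type*} [DecidableEq α] (S : Finset α) (a : α → ℝ) :
    ∑ T ∈ S.powerset, ∑ T' ∈ S.powerset, (∑ i ∈ T, a i - ∑ i ∈ T', a i) ^ 2
      = (2 ^ S.card) ^ 2 / 2 * ∑ i ∈ S, (a i) ^ 2 := by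
  have expand : ∀ T ∈ S.powerset, ∑ T' ∈ S.powerset, (∑ i ∈ T, a i - ∑ i ∈ T', a i) ^ 2
      = (2 ^ S.card : ℝ) * (∑ i ∈ T, a i) ^ 2
        - 2 * (∑ T' ∈ S.powerset, ∑ i ∈ T', a i) * (∑ i ∈ T, a i)
        + ∑ T' ∈ S.powerset, (∑ i ∈ T', a i) ^ 2 := by
    intro T _
    have : ∀ T' ∈ S.powerset, (∑ i ∈ T, a i - ∑ i ∈ T', a i) ^ 2
        = (∑ i ∈ T, a i) ^ 2 - 2 * (∑ i ∈ T, a i) * (∑ i ∈ T', a i) + (∑ i ∈ T', a i) ^ 2 := by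
      intro T' _; ring
    rw [Finset.sum_congr rfl this]
    simp only [Finset.sum_add_distrib, Finset.sum_sub_distrib, Finset.sum_const,
      Finset.card_powerset, ← Finset.mul_sum, nsmul_eq_mul]
    push_cast
    ring
  rw [Finset.sum_congr rfl expand]
  simp only [Finset.sum_add_distrib, Finset.sum_sub_distrib, Finset.sum_const,
    Finset.card_powerset, ← Finset.mul_sum, ← Finset.sum_mul, nsmul_eq_mul]
  rw [pow_sum_L1, pow_sum_L2]
  push_cast
  ring

lemma vertex_mem_base {n : ℕ} {X : Set (Fin n → ℝ)} {v : Fin n → ℝ}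
    (h : IsVertex (convexHull ℝ X) v) : v ∈ X := by
  by_contra hx
  apply h.2
  have hsub : X ⊆ convexHull ℝ X \ {v} := fun y hy =>
    ⟨subset_convexHull ℝ X hy, by rintro rfl; exact hx hy⟩
  exact convexHull_mono hsub h.1

lemma f_injOn {m n : ℕ} (A : Matrix (Fin m) (Fin n) ℤ) (b : Fin m → ℤ)
    (v : Fin n → ℝ) (hv : IsVertex (integerHull A b) v)
    (S : Finset (Fin n)) (hS : S = Finset.univ.filter (fun i => v i ≠ 0)) :
    Set.InjOn (fun T : Finset (Fin n) => (fun j => ∑ i ∈ T, A j i : Fin m → ℤ))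
      S.powerset := by
  classical
  obtain ⟨z, hz0, hzb, hvz⟩ := vertex_mem_base hv
  intro T₁ h₁ T₂ h₂ hF
  by_contra hne
  set w : Fin n → ℤ := fun i => (if i ∈ T₁ then 1 else 0) - (if i ∈ T₂ then 1 else 0) with hw
  have hT₁S := Finset.mem_powerset.1 h₁
  have hT₂S := Finset.mem_powerset.1 h₂
  have hsupp : ∀ i, i ∉ S → w i = 0 := by
    intro i hi
    simp only [hw]
    rw [if_neg (fun h => hi (hT₁S h)), if_neg (fun h => hi (hT₂S h))]
    ring
  have hz1 : ∀ i ∈ S, 1 ≤ z i := by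
    intro i hi
    rw [hS, Finset.mem_filter] at hi
    have h0 : z i ≠ 0 := by
      intro h0
      apply hi.2
      rw [hvz]; simp [h0]
    have := hz0 i
    omega
  have hwbd : ∀ i, -1 ≤ w i ∧ w i ≤ 1 := by
    intro i
    simp only [hw]
    split <;> split <;> simp
  have hwne : ∃ i, w i ≠ 0 := by
    by_contra hall
    push_neg at hall
    apply hne
    ext i
    have := hall i
    simp only [hw] at this
    by_cases h1 : i ∈ T₁ <;> by_cases h2 : i ∈ T₂ <;> simp [h1, h2] at this ⊢
  obtain ⟨i₀, hi₀⟩ := hwne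
  have hAw : A.mulVec w = 0 := by
    funext j
    have := congrFun hF j
    simp only at this
    simp only [mulVec, dotProduct, hw, mul_sub, mul_ite, mul_one, mul_zero]
    rw [Finset.sum_sub_distrib]
    rw [Finset.sum_ite_mem, Finset.sum_ite_mem, Finset.univ_inter, Finset.univ_inter]
    simp [this]
  have hmem : ∀ (w' : Fin n → ℤ), (∀ i, 0 ≤ z i + w' i) → A.mulVec w' = 0 →
      (fun i => ((z i + w' i : ℤ) : ℝ)) ∈
        {x : Fin n → ℝ | ∃ y : Fin n → ℤ, (∀ i, 0 ≤ y i) ∧ A.mulVec y = b ∧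
          x = fun i => (y i : ℝ)} := by
    intro w' hpos hker
    exact ⟨z + w', hpos, by rw [Matrix.mulVec_add, hker, hzb]; simp, rfl⟩
  have hposw : ∀ i, 0 ≤ z i + w i := by
    intro i
    by_cases hi : i ∈ S
    · have := hz1 i hi; have := (hwbd i).1; omega
    · rw [hsupp i hi]; have := hz0 i; omega
  have hposw' : ∀ i, 0 ≤ z i + (-w) i := by
    intro i
    by_cases hi : i ∈ S
    · have := hz1 i hi; have := (hwbd i).2; simp only [Pi.neg_apply]; omega
    · rw [Pi.neg_apply, hsupp i hi]; have := hz0 i; omega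
  have hAw' : A.mulVec (-w) = 0 := by rw [mulVec_neg, hAw]; simp
  set xp : Fin n → ℝ := fun i => ((z i + w i : ℤ) : ℝ) with hxpe
  set xm : Fin n → ℝ := fun i => ((z i + (-w) i : ℤ) : ℝ) with hxme
  have hmxp := hmem w hposw hAw
  have hmxm := hmem (-w) hposw' hAw'
  have hxpv : xp ≠ v := by
    intro h
    have := congrFun h i₀
    rw [hvz] at this
    simp only [hxpe] at this
    have : (z i₀ + w i₀ : ℤ) = z i₀ := by exact_mod_cast this
    omega
  have hxmv : xm ≠ v := by
    intro h
    have := congrFun h i₀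
    rw [hvz] at this
    simp only [hxme] at this
    have : (z i₀ + (-w) i₀ : ℤ) = z i₀ := by exact_mod_cast this
    simp only [Pi.neg_apply] at this
    omega
  have hmid : v = (1/2 : ℝ) • xp + (1/2 : ℝ) • xm := by
    funext i
    rw [hvz]
    simp only [hxpe, hxme, Pi.add_apply, Pi.smul_apply, Pi.neg_apply, smul_eq_mul]
    push_cast
    ring
  apply hv.2
  have hX : ∀ y ∈ ({xp, xm} : Set (Fin n → ℝ)), y ∈ integerHull A b \ {v} := by
    rintro y (rfl | rfl)
    · exact ⟨subset_convexHull ℝ _ hmxp, hxpv⟩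
    · exact ⟨subset_convexHull ℝ _ hmxm, hxmv⟩
  have hseg : v ∈ segment ℝ xp xm :=
    ⟨1/2, 1/2, by norm_num, by norm_num, by norm_num, hmid.symm⟩
  exact convexHull_mono (Set.pair_subset_iff.2 ⟨hX xp (by simp), hX xm (by simp)⟩)
    ((segment_subset_convexHull (by simp) (by simp)) hseg)

lemma fact_bound : ∀ m : ℕ, 1 ≤ m →
    (m : ℝ) ^ m * Real.exp 1 ≤ Real.exp 1 ^ m * (Nat.factorial m) := by
  intro m hm
  induction m with
  | zero => omega
  | succ k ih =>
    rcases Nat.eq_or_lt_of_le hm with h1 | h1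
    · simp [← h1]
    · have hk : 1 ≤ k := by omega
      have ihk := ih hk
      have hkpos : (0:ℝ) < k := by exact_mod_cast hk
      have hstep : ((k:ℝ) + 1) ^ k ≤ Real.exp 1 * (k:ℝ) ^ k := by
        have h2 : (1 + 1/(k:ℝ)) ≤ Real.exp (1/(k:ℝ)) := by
          have := Real.add_one_le_exp (1/(k:ℝ))
          linarith
        have h3 : (1 + 1/(k:ℝ)) ^ k ≤ Real.exp (1/(k:ℝ)) ^ k :=
          pow_le_pow_left₀ (by positivity) h2 k
        have h4 : Real.exp (1/(k:ℝ)) ^ k = Real.exp 1 := by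
          rw [← Real.exp_nat_mul]
          congr 1
          field_simp
        have h5 : ((k:ℝ) + 1) ^ k = (k:ℝ) ^ k * (1 + 1/(k:ℝ)) ^ k := by
          rw [← mul_pow]
          congr 1
          field_simp
        rw [h5]
        calc (k:ℝ) ^ k * (1 + 1/(k:ℝ)) ^ k ≤ (k:ℝ) ^ k * Real.exp 1 := by
              apply mul_le_mul_of_nonneg_left _ (by positivity)
              rw [← h4] at *
              exact h3
          _ = Real.exp 1 * (k:ℝ) ^ k := by ring
      have hexp : (0:ℝ) < Real.exp 1 := Real.exp_pos 1
      have hcast : ((k+1 : ℕ) : ℝ) = (k:ℝ) + 1 := by push_cast; ring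
      rw [Nat.factorial_succ]
      push_cast
      calc ((k:ℝ) + 1) ^ (k+1) * Real.exp 1
          = (((k:ℝ) + 1) ^ k * (((k:ℝ)+1) * Real.exp 1)) := by ring
        _ ≤ (Real.exp 1 * (k:ℝ) ^ k) * (((k:ℝ)+1) * Real.exp 1) := by
            apply mul_le_mul_of_nonneg_right hstep (by positivity)
        _ = (((k:ℝ)) ^ k * Real.exp 1) * (((k:ℝ)+1) * Real.exp 1) := by ring
        _ ≤ (Real.exp 1 ^ k * (Nat.factorial k)) * (((k:ℝ)+1) * Real.exp 1) := by
            apply mul_le_mul_of_nonneg_right ihk (by positivity)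
        _ = Real.exp 1 ^ (k+1) * (((k:ℝ)+1) * (Nat.factorial k)) := by ring

lemma qe_bound : 1 ≤ (1 - 1 / (1.12 * Real.sqrt 2)) * Real.exp 1 := by
  have hu : (1.414213 : ℝ) ≤ Real.sqrt 2 := by
    nlinarith [Real.sq_sqrt (show (0:ℝ) ≤ 2 by norm_num), Real.sqrt_nonneg 2]
  have hE1 : (2.7182818283 : ℝ) ≤ Real.exp 1 := le_of_lt Real.exp_one_gt_d9
  have hup : (0:ℝ) < Real.sqrt 2 := lt_of_lt_of_le (by norm_num) hu
  have h112 : (0:ℝ) < 1.12 * Real.sqrt 2 := by positivity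
  have hrw : (1 - 1 / (1.12 * Real.sqrt 2))
      = (1.12 * Real.sqrt 2 - 1) / (1.12 * Real.sqrt 2) := by
    field_simp
  rw [hrw, div_mul_eq_mul_div, le_div_iff₀ h112, one_mul]
  nlinarith [mul_nonneg (sub_nonneg.2 hu) (sub_nonneg.2 hE1)]

lemma count_main {m n : ℕ} (A : Matrix (Fin m) (Fin n) ℤ) (S : Finset (Fin n))
    (hinj : Set.InjOn (fun T : Finset (Fin n) => (fun j => ∑ i ∈ T, A j i : Fin m → ℤ))
      S.powerset) :
    (1 - 1 / (1.12 * Real.sqrt 2)) * 2 ^ S.card ≤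
      2 ^ m * (1.12 * (∑ j : Fin m, Real.sqrt (∑ i ∈ S, ((A j i : ℝ)) ^ 2)) + m) ^ m
        / (Nat.factorial m) := by
  classical
  set s := S.card with hs
  set P := S.powerset with hP
  set F : Finset (Fin n) → Fin m → ℤ := fun T j => ∑ i ∈ T, A j i with hF
  set W : Fin m → ℝ := fun j => ∑ i ∈ S, ((A j i : ℝ)) ^ 2 with hW
  set c : Fin m → ℝ := fun j => Real.sqrt (W j) with hc
  set C : ℝ := ∑ j : Fin m, c j with hC
  set Γ₁ : ℝ := 1.12 * C with hΓ₁
  set N : Finset (Fin n) → Finset (Fin n) → ℝ :=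
    fun T T' => ∑ j : Fin m, |((F T j : ℝ)) - ((F T' j : ℝ))| with hN
  have hW0 : ∀ j, 0 ≤ W j := fun j => Finset.sum_nonneg fun i _ => sq_nonneg _
  have hc0 : ∀ j, 0 ≤ c j := fun j => Real.sqrt_nonneg _
  have hC0 : 0 ≤ C := Finset.sum_nonneg fun j _ => hc0 j
  have hΓ₁0 : 0 ≤ Γ₁ := by rw [hΓ₁]; positivity
  have hN0 : ∀ T T', 0 ≤ N T T' :=
    fun T T' => Finset.sum_nonneg fun j _ => abs_nonneg _
  have hPcard : (P.card : ℝ) = 2 ^ s := by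
    rw [hP, Finset.card_powerset, hs]; push_cast; ring
  have hs2 : (0:ℝ) < Real.sqrt 2 := Real.sqrt_pos.2 (by norm_num)
  -- Step A
  have stepA : ∀ j : Fin m, ∑ T ∈ P, ∑ T' ∈ P, (((F T j : ℝ)) - ((F T' j : ℝ))) ^ 2
      = ((2:ℝ) ^ s) ^ 2 / 2 * W j := by
    intro j
    have hcast : ∀ T : Finset (Fin n), ((F T j : ℝ)) = ∑ i ∈ T, ((A j i : ℝ)) := by
      intro T; simp [hF]
    simp only [hcast]
    exact pow_sum_double S (fun i => (A j i : ℝ))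
  -- Step B
  have stepB : ∑ T ∈ P, ∑ T' ∈ P, N T T' ≤ ((2:ℝ) ^ s) ^ 2 * C / Real.sqrt 2 := by
    have swap : ∑ T ∈ P, ∑ T' ∈ P, N T T'
        = ∑ j : Fin m, ∑ T ∈ P, ∑ T' ∈ P, |((F T j : ℝ)) - ((F T' j : ℝ))| := by
      have h1 : ∑ T ∈ P, ∑ T' ∈ P, N T T'
          = ∑ T ∈ P, ∑ j : Fin m, ∑ T' ∈ P, |((F T j : ℝ)) - ((F T' j : ℝ))| :=
        Finset.sum_congr rfl fun T _ => Finset.sum_comm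
      rw [h1]
      exact Finset.sum_comm
    rw [swap, hC, Finset.mul_sum, Finset.sum_div]
    apply Finset.sum_le_sum
    intro j _
    set L := ∑ T ∈ P, ∑ T' ∈ P, |((F T j : ℝ)) - ((F T' j : ℝ))| with hL
    have hL0 : 0 ≤ L := Finset.sum_nonneg fun _ _ => Finset.sum_nonneg fun _ _ => abs_nonneg _
    set R := ((2:ℝ) ^ s) ^ 2 * c j / Real.sqrt 2 with hR
    have hR0 : 0 ≤ R := by
      apply div_nonneg _ (Real.sqrt_nonneg 2)
      exact mul_nonneg (by positivity) (hc0 j)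
    have hprod : L = ∑ p ∈ P ×ˢ P, |((F p.1 j : ℝ)) - ((F p.2 j : ℝ))| := by
      rw [Finset.sum_product]
    have hsq : L ^ 2 ≤ ((2:ℝ) ^ s) ^ 2 * (((2:ℝ) ^ s) ^ 2 / 2 * W j) := by
      rw [hprod]
      refine le_trans (sq_sum_le_card_mul_sum_sq
        (s := P ×ˢ P) (f := fun p => |((F p.1 j : ℝ)) - ((F p.2 j : ℝ))|)) ?_
      have hcard : ((P ×ˢ P).card : ℝ) = ((2:ℝ) ^ s) ^ 2 := by
        rw [Finset.card_product]; push_cast [hPcard]; rw [← hPcard]; push_cast; ring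
      have hsum : ∑ p ∈ P ×ˢ P, |((F p.1 j : ℝ)) - ((F p.2 j : ℝ))| ^ 2
          = ((2:ℝ) ^ s) ^ 2 / 2 * W j := by
        rw [← stepA j, Finset.sum_product]
        simp [sq_abs]
      rw [hcard, hsum]
    have hRsq : R ^ 2 = ((2:ℝ) ^ s) ^ 2 * (((2:ℝ) ^ s) ^ 2 / 2 * W j) := by
      rw [hR, div_pow, mul_pow, Real.sq_sqrt (by norm_num : (0:ℝ) ≤ 2), hc,
        Real.sq_sqrt (hW0 j)]
      ring
    calc L = Real.sqrt (L ^ 2) := (Real.sqrt_sq hL0).symm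
      _ ≤ Real.sqrt (R ^ 2) := Real.sqrt_le_sqrt (by rw [hRsq]; exact hsq)
      _ = R := Real.sqrt_sq hR0
  -- zero case helper
  have hzero : C = 0 → ∀ T ∈ P, ∀ T' ∈ P, N T T' = 0 := by
    intro hCeq T hT T' hT'
    have hcj : ∀ j ∈ (Finset.univ : Finset (Fin m)), c j = 0 :=
      (Finset.sum_eq_zero_iff_of_nonneg (fun j _ => hc0 j)).1 hCeq
    have hWj : ∀ j : Fin m, W j = 0 := by
      intro j
      have h1 : Real.sqrt (W j) = 0 := hcj j (Finset.mem_univ j)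
      have h2 := Real.sqrt_eq_zero'.1 h1
      exact le_antisymm h2 (hW0 j)
    have hA0 : ∀ j : Fin m, ∀ i ∈ S, A j i = 0 := by
      intro j i hi
      have h3 : ∀ i ∈ S, ((A j i : ℝ)) ^ 2 = 0 :=
        (Finset.sum_eq_zero_iff_of_nonneg (fun i _ => sq_nonneg _)).1 (hWj j)
      have h4 : ((A j i : ℝ)) = 0 := by
        have := h3 i hi
        nlinarith [this]
      exact_mod_cast h4
    rw [hN]
    apply Finset.sum_eq_zero
    intro j _
    have hFT : F T j = 0 := Finset.sum_eq_zero fun i hi =>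
      hA0 j i (Finset.mem_powerset.1 (hP ▸ hT) hi)
    have hFT' : F T' j = 0 := Finset.sum_eq_zero fun i hi =>
      hA0 j i (Finset.mem_powerset.1 (hP ▸ hT') hi)
    rw [hFT, hFT']
    simp
  -- Step C
  set Gd := (P ×ˢ P).filter (fun p => N p.1 p.2 ≤ Γ₁) with hGd
  have stepC : (1 - 1 / (1.12 * Real.sqrt 2)) * ((2:ℝ) ^ s) ^ 2 ≤ (Gd.card : ℝ) := by
    set B := (P ×ˢ P).filter (fun p => ¬ N p.1 p.2 ≤ Γ₁) with hB
    have hsplitN : Gd.card + B.card = P.card * P.card := by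
      rw [hGd, hB, Finset.card_filter_add_card_filter_not, Finset.card_product]
    have hsplit : (Gd.card : ℝ) = ((2:ℝ) ^ s) ^ 2 - B.card := by
      have : ((Gd.card + B.card : ℕ) : ℝ) = ((P.card * P.card : ℕ) : ℝ) := by rw [hsplitN]
      push_cast at this
      rw [hPcard] at this
      nlinarith [this]
    rcases eq_or_lt_of_le hC0 with hCeq | hCpos
    · have hBe : B = ∅ := by
        rw [hB, Finset.filter_eq_empty_iff]
        rintro ⟨T, T'⟩ hp
        rw [Finset.mem_product] at hp
        simp only [not_not]
        rw [hzero hCeq.symm T hp.1 T' hp.2, hΓ₁, ← hCeq]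
        norm_num
      rw [hBe] at hsplit
      simp only [Finset.card_empty, Nat.cast_zero, sub_zero] at hsplit
      rw [hsplit]
      have h2 : 0 ≤ 1/(1.12 * Real.sqrt 2) := by positivity
      nlinarith [sq_nonneg ((2:ℝ)^s)]
    · have hBge : ∀ p ∈ B, Γ₁ ≤ N p.1 p.2 := by
        intro p hp
        rw [hB, Finset.mem_filter] at hp
        exact le_of_lt (lt_of_not_ge hp.2)
      have hBsum : (B.card : ℝ) * Γ₁ ≤ ∑ p ∈ B, N p.1 p.2 := by
        calc (B.card : ℝ) * Γ₁ = ∑ _p ∈ B, Γ₁ := by rw [Finset.sum_const, nsmul_eq_mul]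
          _ ≤ ∑ p ∈ B, N p.1 p.2 := Finset.sum_le_sum hBge
      have hBtot : ∑ p ∈ B, N p.1 p.2 ≤ ∑ T ∈ P, ∑ T' ∈ P, N T T' := by
        rw [← Finset.sum_product (s := P) (t := P) (f := fun p => N p.1 p.2)]
        exact Finset.sum_le_sum_of_subset_of_nonneg (Finset.filter_subset _ _)
          (fun p _ _ => hN0 _ _)
      have h1 : (B.card : ℝ) * (1.12 * C) ≤ ((2:ℝ) ^ s) ^ 2 * C / Real.sqrt 2 := by
        rw [← hΓ₁]; exact le_trans hBsum (le_trans hBtot stepB)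
      have h2 : (B.card : ℝ) * (1.12 * Real.sqrt 2) * C ≤ ((2:ℝ)^s)^2 * C := by
        calc (B.card : ℝ) * (1.12 * Real.sqrt 2) * C
            = (B.card : ℝ) * (1.12 * C) * Real.sqrt 2 := by ring
          _ ≤ (((2:ℝ)^s)^2 * C / Real.sqrt 2) * Real.sqrt 2 :=
              mul_le_mul_of_nonneg_right h1 (le_of_lt hs2)
          _ = ((2:ℝ)^s)^2 * C := div_mul_cancel₀ _ (ne_of_gt hs2)
      have h3 : (B.card : ℝ) * (1.12 * Real.sqrt 2) ≤ ((2:ℝ)^s)^2 :=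
        le_of_mul_le_mul_right h2 hCpos
      have hBcard : (B.card : ℝ) ≤ ((2:ℝ)^s)^2 / (1.12 * Real.sqrt 2) := by
        rw [le_div_iff₀ (by positivity)]
        exact h3
      have e1 : (1 - 1/(1.12 * Real.sqrt 2)) * ((2:ℝ)^s)^2
          = ((2:ℝ)^s)^2 - ((2:ℝ)^s)^2 / (1.12 * Real.sqrt 2) := by ring
      linarith [hBcard, hsplit, e1]
  -- Step D
  have stepD : ∃ T₀ ∈ P, (1 - 1 / (1.12 * Real.sqrt 2)) * (2:ℝ) ^ s
      ≤ ((P.filter (fun T => N T T₀ ≤ Γ₁)).card : ℝ) := by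
    have hfib : Gd.card = ∑ T' ∈ P, (P.filter (fun T => N T T' ≤ Γ₁)).card := by
      rw [hGd, Finset.card_eq_sum_card_fiberwise
        (f := Prod.snd) (t := P) (fun p hp => (Finset.mem_product.1 (Finset.mem_filter.1 hp).1).2)]
      apply Finset.sum_congr rfl
      intro T' hT'
      apply Finset.card_bij (fun p _ => p.1)
      · intro p hp
        simp only [Finset.mem_filter] at hp ⊢
        obtain ⟨⟨hpp, hpN⟩, hp2⟩ := hp
        rw [Finset.mem_product] at hpp
        subst hp2
        exact ⟨hpp.1, hpN⟩
      · intro p hp p' hp' h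
        simp only [Finset.mem_filter] at hp hp'
        ext1
        · exact h
        · rw [hp.2, hp'.2]
      · intro T hT
        simp only [Finset.mem_filter] at hT
        exact ⟨(T, T'), by simp [Finset.mem_filter, Finset.mem_product, hT.1, hT.2, hT'], rfl⟩
    by_contra hcon
    push_neg at hcon
    have hne : P.Nonempty := ⟨∅, Finset.mem_powerset.2 (Finset.empty_subset _)⟩
    have hsum : (Gd.card : ℝ) = ∑ T' ∈ P, ((P.filter (fun T => N T T' ≤ Γ₁)).card : ℝ) := by
      rw [hfib]; push_cast; ring
    have hlt : (Gd.card : ℝ) < ∑ _T' ∈ P, (1 - 1 / (1.12 * Real.sqrt 2)) * (2:ℝ) ^ s := by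
      rw [hsum]
      exact Finset.sum_lt_sum_of_nonempty hne (fun T' hT' => hcon T' hT')
    rw [Finset.sum_const, nsmul_eq_mul, hPcard] at hlt
    nlinarith [stepC, hlt]
  obtain ⟨T₀, hT₀, hfib⟩ := stepD
  -- Step E
  have stepE : ((P.filter (fun T => N T T₀ ≤ Γ₁)).card : ℝ)
      ≤ 2 ^ m * (Γ₁ + m) ^ m / (Nat.factorial m) := by
    set K : ℕ := ⌊Γ₁⌋₊ with hK
    set G := P.filter (fun T => N T T₀ ≤ Γ₁) with hG
    set d : Finset (Fin n) → Fin m → ℤ := fun T j => F T j - F T₀ j with hd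
    have hGsum : ∀ T ∈ G, ∑ j : Fin m, (d T j).natAbs ≤ K := by
      intro T hT
      rw [hG, Finset.mem_filter] at hT
      apply Nat.le_floor
      push_cast [Nat.cast_natAbs]
      refine le_of_eq_of_le ?_ hT.2
      rw [hN]
      apply Finset.sum_congr rfl
      intro j _
      rw [hd]
      push_cast
      ring_nf
    set Φ : Finset (Fin n) → (Fin m → Bool) × (Fin (m+1) → ℕ) :=
      fun T => (fun j => decide (d T j < 0),
        Fin.cons (K - ∑ j : Fin m, (d T j).natAbs) (fun j => (d T j).natAbs)) with hΦ
    set U := (Finset.univ : Finset (Fin m → Bool)) ×ˢ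
        Finset.piAntidiag (Finset.univ : Finset (Fin (m+1))) K with hU
    have hmaps : ∀ T ∈ G, Φ T ∈ U := by
      intro T hT
      rw [hU, Finset.mem_product]
      refine ⟨Finset.mem_univ _, ?_⟩
      rw [Finset.mem_piAntidiag]
      refine ⟨?_, fun i _ => Finset.mem_univ i⟩
      rw [hΦ]
      simp only [Fin.sum_univ_succ, Fin.cons_zero, Fin.cons_succ]
      exact Nat.sub_add_cancel (hGsum T hT)
    have hinjΦ : Set.InjOn Φ G := by
      intro T hT T' hT' heq
      have h1 := congrArg Prod.fst heq
      have h2 := congrArg Prod.snd heq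
      simp only [hΦ] at h1 h2
      have hF_eq : (fun j => F T j : Fin m → ℤ) = fun j => F T' j := by
        funext j
        have ha : (d T j).natAbs = (d T' j).natAbs := by
          have := congrFun h2 j.succ
          simpa [Fin.cons_succ] using this
        have hb : (d T j < 0) ↔ (d T' j < 0) := by
          have := congrFun h1 j
          exact decide_eq_decide.mp this
        have : d T j = d T' j := by omega
        rw [hd] at this
        simp only at this
        omega
      have hTmem : T ∈ S.powerset := hP ▸ (Finset.mem_filter.1 (hG ▸ hT)).1
      have hTmem' : T' ∈ S.powerset := hP ▸ (Finset.mem_filter.1 (hG ▸ hT')).1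
      exact hinj hTmem hTmem' hF_eq
    have hcard : G.card ≤ U.card := Finset.card_le_card_of_injOn Φ hmaps hinjΦ
    have hUcard : U.card = 2 ^ m * Nat.multichoose (m+1) K := by
      rw [hU, Finset.card_product]
      congr 1
      · rw [Finset.card_univ]; simp
      · rw [← Finset.map_sym_eq_piAntidiag (Finset.univ : Finset (Fin (m+1))) K,
          Finset.card_map, Finset.sym_univ, Finset.card_univ,
          Sym.card_sym_eq_multichoose, Fintype.card_fin]
    have hmc : (Nat.multichoose (m+1) K : ℝ) ≤ ((m + K : ℝ)) ^ m / (Nat.factorial m) := by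
      rw [Nat.multichoose_eq]
      have he : (m + 1 + K - 1) = m + K := by omega
      rw [he, ← Nat.choose_symm_add]
      have := Nat.choose_le_pow_div (α := ℝ) m (m + K)
      simpa using this
    have hKΓ : (K : ℝ) ≤ Γ₁ := Nat.floor_le hΓ₁0
    calc (G.card : ℝ) ≤ (U.card : ℝ) := by exact_mod_cast hcard
      _ = 2 ^ m * (Nat.multichoose (m+1) K : ℝ) := by rw [hUcard]; push_cast; ring
      _ ≤ 2 ^ m * ((m + K : ℝ) ^ m / (Nat.factorial m)) := by
          apply mul_le_mul_of_nonneg_left hmc (by positivity)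
      _ ≤ 2 ^ m * ((Γ₁ + m) ^ m / (Nat.factorial m)) := by
          apply mul_le_mul_of_nonneg_left _ (by positivity)
          apply div_le_div_of_nonneg_right ?_ (by positivity)
          exact pow_le_pow_left₀ (by positivity) (by linarith) m
      _ = 2 ^ m * (Γ₁ + m) ^ m / (Nat.factorial m) := by ring
  calc (1 - 1 / (1.12 * Real.sqrt 2)) * 2 ^ s
      ≤ 2 ^ m * (Γ₁ + m) ^ m / (Nat.factorial m) := le_trans hfib stepE
    _ = _ := by rw [hΓ₁, hC]

end Aux

open Classical in
theorem stmt12 {m n : ℕ} (hm : 0 < m) (A : Matrix (Fin m) (Fin n) ℤ) (b : Fin m → ℤ)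
    (v : Fin n → ℝ) (hv : IsVertex (integerHull A b) v)
    (S : Finset (Fin n)) (hS : S = Finset.univ.filter (fun i => v i ≠ 0))
    (Γ : ℝ)
    (hΓ : Γ = 1.12 * (∑ j : Fin m, Real.sqrt (∑ i ∈ S, ((A j i : ℝ)) ^ 2)) +
      Real.sqrt (∑ i ∈ S, ((∑ j : Fin m, |(A j i : ℝ)|)) ^ 2)) :
    (S.card : ℝ) ≤
      m * Real.logb 2 (2 * Real.exp 1 * Γ / m + 2 * Real.exp 1) := by
  classical
  have hinj := f_injOn A b v hv S hS
  have hq := count_main A S hinj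
  set s := S.card with hscard
  set Γ₁ : ℝ := 1.12 * (∑ j : Fin m, Real.sqrt (∑ i ∈ S, ((A j i : ℝ)) ^ 2)) with hΓ₁
  set Γ₂ : ℝ := Real.sqrt (∑ i ∈ S, ((∑ j : Fin m, |(A j i : ℝ)|)) ^ 2) with hΓ₂
  have hΓ₂0 : 0 ≤ Γ₂ := Real.sqrt_nonneg _
  have hΓ₁0 : 0 ≤ Γ₁ := by
    rw [hΓ₁]
    have : 0 ≤ ∑ j : Fin m, Real.sqrt (∑ i ∈ S, ((A j i : ℝ)) ^ 2) :=
      Finset.sum_nonneg fun j _ => Real.sqrt_nonneg _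
    linarith
  have hΓeq : Γ = Γ₁ + Γ₂ := hΓ
  have hΓ0 : 0 ≤ Γ := by rw [hΓeq]; linarith
  set E := Real.exp 1 with hEdef
  have hE : (0:ℝ) < E := Real.exp_pos 1
  have hE1 : (2.7182818283 : ℝ) ≤ E := le_of_lt Real.exp_one_gt_d9
  have hmR : (0:ℝ) < m := by exact_mod_cast hm
  have hfact : (0:ℝ) < (Nat.factorial m : ℝ) := by
    exact_mod_cast Nat.factorial_pos m
  -- Step 1
  have h1 : (2:ℝ) ^ s ≤ E * (2 ^ m * (Γ₁ + m) ^ m / (Nat.factorial m)) := by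
    have hq' : (1 - 1 / (1.12 * Real.sqrt 2)) * 2 ^ s
        ≤ 2 ^ m * (Γ₁ + m) ^ m / (Nat.factorial m) := hq
    calc (2:ℝ) ^ s = 1 * 2 ^ s := by ring
      _ ≤ ((1 - 1 / (1.12 * Real.sqrt 2)) * E) * 2 ^ s :=
          mul_le_mul_of_nonneg_right qe_bound (by positivity)
      _ = E * ((1 - 1 / (1.12 * Real.sqrt 2)) * 2 ^ s) := by ring
      _ ≤ E * (2 ^ m * (Γ₁ + m) ^ m / (Nat.factorial m)) :=
          mul_le_mul_of_nonneg_left hq' hE.le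
  -- Step 2
  have h2 : E * (2 ^ m * (Γ₁ + m) ^ m / (Nat.factorial m))
      ≤ (2 * E * (Γ + m) / m) ^ m := by
    have hΓm0 : (0:ℝ) ≤ Γ₁ + m := by linarith
    have hΓm1 : Γ₁ + (m:ℝ) ≤ Γ + m := by rw [hΓeq]; linarith
    have hmono : (Γ₁ + m) ^ m ≤ (Γ + m) ^ m := pow_le_pow_left₀ hΓm0 hΓm1 m
    have hfb := fact_bound m (by omega)
    have hQ0 : (0:ℝ) ≤ 2 ^ m * (Γ + m) ^ m :=
      mul_nonneg (by positivity) (pow_nonneg (by linarith) m)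
    have hmid : E * (2 ^ m * (Γ + m) ^ m / (Nat.factorial m))
        ≤ 2 ^ m * (Γ + m) ^ m * E ^ m / (m:ℝ) ^ m := by
      rw [mul_div_assoc']
      rw [div_le_div_iff₀ hfact (pow_pos hmR m)]
      calc E * (2 ^ m * (Γ + m) ^ m) * (m:ℝ) ^ m
          = ((m:ℝ) ^ m * E) * (2 ^ m * (Γ + m) ^ m) := by ring
        _ ≤ (E ^ m * (Nat.factorial m)) * (2 ^ m * (Γ + m) ^ m) :=
            mul_le_mul_of_nonneg_right hfb hQ0
        _ = 2 ^ m * (Γ + m) ^ m * E ^ m * (Nat.factorial m) := by ring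
    have hfinal : 2 ^ m * (Γ + m) ^ m * E ^ m / (m:ℝ) ^ m = (2 * E * (Γ + m) / m) ^ m := by
      rw [div_pow, mul_pow, mul_pow]
      ring
    calc E * (2 ^ m * (Γ₁ + m) ^ m / (Nat.factorial m))
        ≤ E * (2 ^ m * (Γ + m) ^ m / (Nat.factorial m)) := by
          apply mul_le_mul_of_nonneg_left _ hE.le
          apply div_le_div_of_nonneg_right ?_ hfact.le
          apply mul_le_mul_of_nonneg_left hmono (by positivity : (0:ℝ) ≤ 2 ^ m)
      _ ≤ 2 ^ m * (Γ + m) ^ m * E ^ m / (m:ℝ) ^ m := hmid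
      _ = (2 * E * (Γ + m) / m) ^ m := hfinal
  -- Step 3 : logs
  have hXeq : 2 * E * Γ / m + 2 * E = 2 * E * (Γ + m) / m := by
    field_simp
  have hX1 : (1:ℝ) < 2 * E * (Γ + m) / m := by
    rw [lt_div_iff₀ hmR]
    nlinarith [hΓ0, hE1, hmR]
  have h3 : (2:ℝ) ^ s ≤ (2 * E * (Γ + m) / m) ^ m := le_trans h1 h2
  have h4 := Real.logb_le_logb_of_le (b := 2) one_lt_two (by positivity) h3
  rw [Real.logb_pow, Real.logb_pow, Real.logb_self_eq_one one_lt_two] at h4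
  rw [hXeq]
  simpa using h4
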